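/- For fixed t > 0 and parameters C0 > 0, D > 0, R > 0, v ≥ 0, the function z ↦ C(z,t) given by the Ogata–Banks solution is strictly decreasing on [0, ∞). -/

import Mathlib

/-- The complementary error function `erfc x = (2/√π) ∫ₓ^∞ e^{-s²} ds`. -/
noncomputable def erfc (x : ℝ) : ℝ :=
  (2 / Real.sqrt Real.pi) * ∫ s in Set.Ioi x, Real.exp (-s ^ 2)

/-- The Ogata–Banks analytical solution of the advection–diffusion–retardation
equation. -/
noncomputable def ogataBanks (C0 v D R z t : ℝ) : ℝ :=
  (C0 / 2) * (erfc ((R * z - v * t) / (2 * Real.sqrt (R * D * t))) +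
    Real.exp (v * z / D) * erfc ((R * z + v * t) / (2 * Real.sqrt (R * D * t))))

open MeasureTheory

lemma integrableOn_gauss (x : ℝ) :
    IntegrableOn (fun s : ℝ => Real.exp (-s ^ 2)) (Set.Ioi x) := by
  have := integrable_exp_neg_mul_sq (b := 1) one_pos
  simpa [neg_mul, one_mul] using this.integrableOn

lemma integrableOn_mul_gauss (x : ℝ) :
    IntegrableOn (fun s : ℝ => s * Real.exp (-s ^ 2)) (Set.Ioi x) := by
  have := integrable_mul_exp_neg_mul_sq (b := 1) one_pos
  simpa [neg_mul, one_mul] using this.integrableOn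

lemma integral_mul_gauss_Ioi (x : ℝ) :
    ∫ s in Set.Ioi x, s * Real.exp (-s ^ 2) = Real.exp (-x ^ 2) / 2 := by
  have hderiv : ∀ s ∈ Set.Ioi x,
      HasDerivAt (fun s : ℝ => -Real.exp (-s ^ 2) / 2) (s * Real.exp (-s ^ 2)) s := by
    intro s _
    have h1 : HasDerivAt (fun s : ℝ => -s ^ 2) (-(2 * s)) s := by
      simpa using (hasDerivAt_pow 2 s).fun_neg
    have h2 := (h1.exp).neg.div_const 2
    have h3 : s * Real.exp (-s ^ 2) = -(Real.exp (-s ^ 2) * -(2 * s)) / 2 := by ring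
    rw [h3]; exact h2
  have hcont : Continuous fun s : ℝ => -Real.exp (-s ^ 2) / 2 := by continuity
  have htend : Filter.Tendsto (fun s : ℝ => -Real.exp (-s ^ 2) / 2)
      Filter.atTop (nhds 0) := by
    have h1 : Filter.Tendsto (fun s : ℝ => -s ^ 2) Filter.atTop Filter.atBot :=
      Filter.tendsto_neg_atTop_atBot.comp (Filter.tendsto_pow_atTop two_ne_zero)
    have := (Real.tendsto_exp_atBot.comp h1).neg.div_const 2
    simpa using this
  have := MeasureTheory.integral_Ioi_of_hasDerivAt_of_tendsto
    hcont.continuousWithinAt hderiv (integrableOn_mul_gauss x) htend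
  rw [this]; ring

lemma erfc_lt_bound {x : ℝ} (hx : 0 < x) :
    erfc x < Real.exp (-x ^ 2) / (x * Real.sqrt Real.pi) := by
  have hπ : 0 < Real.sqrt Real.pi := Real.sqrt_pos.2 Real.pi_pos
  have hI : ∫ s in Set.Ioi x, Real.exp (-s ^ 2) < Real.exp (-x ^ 2) / (2 * x) := by
    have hint : IntegrableOn (fun s : ℝ => (s / x - 1) * Real.exp (-s ^ 2)) (Set.Ioi x) := by
      have h := ((integrableOn_mul_gauss x).const_mul (1 / x)).sub (integrableOn_gauss x)
      refine h.congr (Filter.EventuallyEq.of_eq (funext fun s => ?_))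
      simp only [Pi.sub_apply]
      ring
    have hpos : 0 < ∫ s in Set.Ioi x, (s / x - 1) * Real.exp (-s ^ 2) := by
      rw [MeasureTheory.setIntegral_pos_iff_support_of_nonneg_ae _ hint]
      · refine lt_of_lt_of_le ?_ (measure_mono (s := Set.Ioi x) fun s hs => ?_)
        · rw [Real.volume_Ioi]; exact ENNReal.zero_lt_top
        · refine ⟨Function.mem_support.2 (ne_of_gt ?_), hs⟩
          have hs' : x < s := hs
          have h1 : 0 < s / x - 1 := by
            rw [sub_pos, lt_div_iff₀ hx]; linarith
          exact mul_pos h1 (Real.exp_pos _)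
      · rw [Filter.EventuallyLE, ae_restrict_iff' measurableSet_Ioi]
        filter_upwards with s hs
        have hs' : x < s := hs
        have h1 : 0 ≤ s / x - 1 := by
          rw [sub_nonneg, le_div_iff₀ hx]; linarith
        exact mul_nonneg h1 (Real.exp_pos _).le
    have hsplit : ∫ s in Set.Ioi x, (s / x - 1) * Real.exp (-s ^ 2)
        = (1 / x) * (∫ s in Set.Ioi x, s * Real.exp (-s ^ 2))
          - ∫ s in Set.Ioi x, Real.exp (-s ^ 2) := by
      have heq : (fun s : ℝ => (s / x - 1) * Real.exp (-s ^ 2))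
          = fun s : ℝ => (1 / x) * (s * Real.exp (-s ^ 2)) - Real.exp (-s ^ 2) := by
        funext s; ring
      rw [heq, MeasureTheory.integral_sub ((integrableOn_mul_gauss x).const_mul (1 / x))
        (integrableOn_gauss x), MeasureTheory.integral_const_mul]
    rw [hsplit, integral_mul_gauss_Ioi] at hpos
    have : (1 / x) * (Real.exp (-x ^ 2) / 2) = Real.exp (-x ^ 2) / (2 * x) := by
      field_simp
    linarith
  unfold erfc
  calc (2 / Real.sqrt Real.pi) * ∫ s in Set.Ioi x, Real.exp (-s ^ 2)
      < (2 / Real.sqrt Real.pi) * (Real.exp (-x ^ 2) / (2 * x)) := by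
        exact mul_lt_mul_of_pos_left hI (by positivity)
    _ = Real.exp (-x ^ 2) / (x * Real.sqrt Real.pi) := by
        field_simp

lemma gauss_split {a b : ℝ} (h : a ≤ b) :
    ∫ s in Set.Ioi a, Real.exp (-s ^ 2)
      = (∫ s in a..b, Real.exp (-s ^ 2)) + ∫ s in Set.Ioi b, Real.exp (-s ^ 2) := by
  rw [intervalIntegral.integral_of_le h,
    ← MeasureTheory.setIntegral_union (Set.Ioc_disjoint_Ioi le_rfl) measurableSet_Ioi
      ((integrableOn_gauss a).mono_set Set.Ioc_subset_Ioi_self) (integrableOn_gauss b),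
    Set.Ioc_union_Ioi_eq_Ioi h]

lemma erfc_eq (x : ℝ) :
    erfc x = erfc 0 - (2 / Real.sqrt Real.pi) * ∫ s in (0:ℝ)..x, Real.exp (-s ^ 2) := by
  unfold erfc
  rcases le_total 0 x with h | h
  · rw [gauss_split h]; ring
  · rw [gauss_split h, intervalIntegral.integral_symm 0 x]; ring

lemma hasDerivAt_erfc (x : ℝ) :
    HasDerivAt erfc (-(2 / Real.sqrt Real.pi * Real.exp (-x ^ 2))) x := by
  have hcont : Continuous fun s : ℝ => Real.exp (-s ^ 2) := by continuity
  have h1 : HasDerivAt (fun u : ℝ => ∫ s in (0:ℝ)..u, Real.exp (-s ^ 2))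
      (Real.exp (-x ^ 2)) x :=
    intervalIntegral.integral_hasDerivAt_right (hcont.intervalIntegrable 0 x)
      (hcont.stronglyMeasurableAtFilter _ _) hcont.continuousAt
  have h2 := (h1.const_mul (2 / Real.sqrt Real.pi)).const_sub (erfc 0)
  have heq : (fun u : ℝ => erfc 0 - (2 / Real.sqrt Real.pi) * ∫ s in (0:ℝ)..u,
      Real.exp (-s ^ 2)) = erfc := by
    funext u; rw [erfc_eq u]
  rwa [heq] at h2

/-- For fixed `t > 0`, the Ogata–Banks solution is strictly decreasing in the
depth `z` on `[0, ∞)`. -/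
theorem ogata_banks_strictAnti_in_depth (C0 v D R : ℝ)
    (hC0 : 0 < C0) (hv : 0 ≤ v) (hD : 0 < D) (hR : 0 < R) :
    ∀ t : ℝ, 0 < t →
      StrictAntiOn (fun z => ogataBanks C0 v D R z t) (Set.Ici 0) := by
  intro t ht
  have hπ : 0 < Real.sqrt Real.pi := Real.sqrt_pos.2 Real.pi_pos
  have hRDt : 0 < R * D * t := by positivity
  set σ := Real.sqrt (R * D * t) with hσdef
  have hσ : 0 < σ := Real.sqrt_pos.2 hRDt
  have hσ2 : σ ^ 2 = R * D * t := Real.sq_sqrt hRDt.le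
  set k := R / (2 * σ) with hkdef
  have hk : 0 < k := by positivity
  have hderiv : ∀ z : ℝ, HasDerivAt (fun z => ogataBanks C0 v D R z t)
      ((C0 / 2) * ((-(2 / Real.sqrt Real.pi * Real.exp (-((R * z - v * t) / (2 * σ)) ^ 2)) * k)
        + ((Real.exp (v * z / D) * (v / D)) * erfc ((R * z + v * t) / (2 * σ))
          + Real.exp (v * z / D) *
            (-(2 / Real.sqrt Real.pi * Real.exp (-((R * z + v * t) / (2 * σ)) ^ 2)) * k)))) z := by
    intro z
    have ha : HasDerivAt (fun z : ℝ => (R * z - v * t) / (2 * σ)) k z := by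
      have := (((hasDerivAt_id z).const_mul R).sub_const (v * t)).div_const (2 * σ)
      simpa [hkdef] using this
    have hb : HasDerivAt (fun z : ℝ => (R * z + v * t) / (2 * σ)) k z := by
      have := (((hasDerivAt_id z).const_mul R).add_const (v * t)).div_const (2 * σ)
      simpa [hkdef] using this
    have ha' : HasDerivAt (fun z : ℝ => erfc ((R * z - v * t) / (2 * σ)))
        (-(2 / Real.sqrt Real.pi * Real.exp (-((R * z - v * t) / (2 * σ)) ^ 2)) * k) z :=
      (hasDerivAt_erfc _).comp z ha
    have hb' : HasDerivAt (fun z : ℝ => erfc ((R * z + v * t) / (2 * σ)))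
        (-(2 / Real.sqrt Real.pi * Real.exp (-((R * z + v * t) / (2 * σ)) ^ 2)) * k) z :=
      (hasDerivAt_erfc _).comp z hb
    have hlin : HasDerivAt (fun z : ℝ => v * z / D) (v / D) z := by
      have := ((hasDerivAt_id z).const_mul v).div_const D
      simpa using this
    have hexp : HasDerivAt (fun z : ℝ => Real.exp (v * z / D))
        (Real.exp (v * z / D) * (v / D)) z := hlin.exp
    have hmul := hexp.mul hb'
    have hsum := (ha'.add hmul).const_mul (C0 / 2)
    have hfun : (fun z : ℝ => ogataBanks C0 v D R z t)
        = fun z : ℝ => (C0 / 2) * (erfc ((R * z - v * t) / (2 * σ))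
          + Real.exp (v * z / D) * erfc ((R * z + v * t) / (2 * σ))) := by
      funext z; rw [ogataBanks, hσdef]
    rw [hfun]
    exact hsum
  have hcont : ContinuousOn (fun z => ogataBanks C0 v D R z t) (Set.Ici 0) :=
    fun z _ => ((hderiv z).differentiableAt.continuousAt).continuousWithinAt
  refine strictAntiOn_of_deriv_neg (convex_Ici 0) hcont ?_
  rw [interior_Ici]
  intro z hz
  have hz' : (0:ℝ) < z := hz
  rw [(hderiv z).deriv]
  have hbpos : 0 < (R * z + v * t) / (2 * σ) := by positivity
  have hEB : Real.exp (v * z / D) * Real.exp (-((R * z + v * t) / (2 * σ)) ^ 2)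
      = Real.exp (-((R * z - v * t) / (2 * σ)) ^ 2) := by
    rw [← Real.exp_add]
    congr 1
    have h4 : (2 * σ) ^ 2 = 4 * (R * D * t) := by rw [mul_pow, hσ2]; ring
    have key : ((R * z + v * t) / (2 * σ)) ^ 2 - ((R * z - v * t) / (2 * σ)) ^ 2
        = v * z / D := by
      rw [div_pow, div_pow, ← sub_div, h4]
      field_simp
      ring
    linarith [key]
  have hkey : (v / D) * erfc ((R * z + v * t) / (2 * σ))
      < 4 / Real.sqrt Real.pi * k * Real.exp (-((R * z + v * t) / (2 * σ)) ^ 2) := by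
    rcases hv.eq_or_lt with hv0 | hv'
    · rw [← hv0]
      simp only [zero_div, zero_mul]
      positivity
    · have herfc := erfc_lt_bound hbpos
      have h1 : (v / D) * erfc ((R * z + v * t) / (2 * σ))
          < (v / D) * (Real.exp (-((R * z + v * t) / (2 * σ)) ^ 2)
            / ((R * z + v * t) / (2 * σ) * Real.sqrt Real.pi)) :=
        mul_lt_mul_of_pos_left herfc (by positivity)
      have h2 : (v / D) * (Real.exp (-((R * z + v * t) / (2 * σ)) ^ 2)
            / ((R * z + v * t) / (2 * σ) * Real.sqrt Real.pi))
          ≤ 4 / Real.sqrt Real.pi * k * Real.exp (-((R * z + v * t) / (2 * σ)) ^ 2) := by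
        have hvle : v * σ ^ 2 ≤ R * D * (R * z + v * t) := by
          rw [hσ2]
          nlinarith [mul_nonneg (mul_nonneg (mul_nonneg hR.le hD.le) hR.le) hz'.le]
        set b := (R * z + v * t) / (2 * σ) with hbdef
        have hq : v / (D * b) ≤ 4 * k := by
          rw [div_le_iff₀ (by positivity)]
          have h5 : 4 * k * (D * b) = R * D * (R * z + v * t) / σ ^ 2 := by
            rw [hkdef, hbdef]; field_simp; ring
          rw [h5, le_div_iff₀ (by positivity)]
          linarith
        have h6 : (v / D) * (Real.exp (-b ^ 2) / (b * Real.sqrt Real.pi))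
            = (v / (D * b)) * (Real.exp (-b ^ 2) / Real.sqrt Real.pi) := by
          field_simp
        rw [h6]
        have h7 := mul_le_mul_of_nonneg_right hq
          (by positivity : (0:ℝ) ≤ Real.exp (-b ^ 2) / Real.sqrt Real.pi)
        calc (v / (D * b)) * (Real.exp (-b ^ 2) / Real.sqrt Real.pi)
            ≤ 4 * k * (Real.exp (-b ^ 2) / Real.sqrt Real.pi) := h7
          _ = 4 / Real.sqrt Real.pi * k * Real.exp (-b ^ 2) := by ring
      linarith
  have he := Real.exp_pos (v * z / D)
  have hlt : Real.exp (v * z / D) * ((v / D) * erfc ((R * z + v * t) / (2 * σ)))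
      < Real.exp (v * z / D) * (4 / Real.sqrt Real.pi * k
        * Real.exp (-((R * z + v * t) / (2 * σ)) ^ 2)) :=
    mul_lt_mul_of_pos_left hkey he
  rw [← hEB]
  have hC2 : 0 < C0 / 2 := by positivity
  apply mul_neg_of_pos_of_neg hC2
  ring_nf
  ring_nf at hlt
  linarith [hlt]
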